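/- Let h : ℕ → ℕ be monotonically increasing and satisfy condition (a), and let s ≥ 1 be a natural number such that i ⊕ s = i + s for every i with 0 ≤ i ≤ h(s). Define h_s : ℕ → ℕ by h_s(z) = h(z+s). Then the Grundy function of the chocolate bar game satisfies G_{h_s}(y,z) = (y ⊕ (z+s)) − s for all y, z ∈ ℕ with y ≤ h_s(z). -/

import Mathlib

/-- Condition (a): if `⌊z/2^i⌋ = ⌊z'/2^i⌋` for some `i ≥ 1`,
then `⌊h(z)/2^(i-1)⌋ = ⌊h(z')/2^(i-1)⌋`. -/
def CondA (h : ℕ → ℕ) : Prop :=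
  ∀ z z' i : ℕ, 1 ≤ i → z / 2 ^ i = z' / 2 ^ i →
    h z / 2 ^ (i - 1) = h z' / 2 ^ (i - 1)

/-- The minimum excluded value of a set of natural numbers. -/
noncomputable def mex (S : Set ℕ) : ℕ := sInf {n | n ∉ S}

/-- The Grundy function of the chocolate bar game `CB(f,·,·)`:
`G_f(y,z) = mex({G_f(v,z) : v < y} ∪ {G_f(min(y, f w), w) : w < z})`. -/
noncomputable def grundy (f : ℕ → ℕ) (y z : ℕ) : ℕ :=
  mex ({x | ∃ v, ∃ _ : v < y, x = grundy f v z} ∪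
       {x | ∃ w, ∃ _ : w < z, x = grundy f (min y (f w)) w})
termination_by (z, y)

-- ## Toolkit
lemma xor_div_pow (x y n : ℕ) : (x ^^^ y) / 2 ^ n = x / 2 ^ n ^^^ y / 2 ^ n := by
  have e := Nat.shiftRight_eq_div_pow
  rw [← e, ← e, ← e]
  apply Nat.eq_of_testBit_eq
  intro i
  simp [Nat.testBit_shiftRight, Nat.testBit_xor]

lemma xor_mod_pow (x y n : ℕ) : (x ^^^ y) % 2 ^ n = x % 2 ^ n ^^^ y % 2 ^ n := by
  rw [← Nat.and_two_pow_sub_one_eq_mod, ← Nat.and_two_pow_sub_one_eq_mod,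
    ← Nat.and_two_pow_sub_one_eq_mod, Nat.and_xor_distrib_right]

lemma lt_mul_div_succ (t n : ℕ) (hn : 0 < n) : t < n * (t / n) + n := by
  conv_lhs => rw [← Nat.div_add_mod t n]
  exact Nat.add_lt_add_left (Nat.mod_lt t hn) _

lemma tk_div (n A b : ℕ) (hb : b < 2 ^ n) : (2 ^ n * A + b) / 2 ^ n = A := by
  rw [Nat.mul_add_div (Nat.pos_of_ne_zero (by positivity)), Nat.div_eq_of_lt hb, Nat.add_zero]

lemma tk_mod (n A b : ℕ) (hb : b < 2 ^ n) : (2 ^ n * A + b) % 2 ^ n = b := by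
  rw [Nat.mul_add_mod, Nat.mod_eq_of_lt hb]

lemma xor_combine (n A C b d : ℕ) (hb : b < 2 ^ n) (hd : d < 2 ^ n) :
    (2 ^ n * A + b) ^^^ (2 ^ n * C + d) = 2 ^ n * (A ^^^ C) + (b ^^^ d) := by
  have h1 : ((2 ^ n * A + b) ^^^ (2 ^ n * C + d)) / 2 ^ n = A ^^^ C := by
    rw [xor_div_pow, tk_div n A b hb, tk_div n C d hd]
  have h2 : ((2 ^ n * A + b) ^^^ (2 ^ n * C + d)) % 2 ^ n = b ^^^ d := by
    rw [xor_mod_pow, tk_mod n A b hb, tk_mod n C d hd]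
  conv_lhs => rw [← Nat.div_add_mod ((2 ^ n * A + b) ^^^ (2 ^ n * C + d)) (2 ^ n)]
  rw [h1, h2]

lemma xor_halves (p q : ℕ) : p / 2 ^ 1 = p / 2 ∧ p % 2 ^ 1 = p % 2 := by
  norm_num

lemma xor_div_two (p q : ℕ) : (p ^^^ q) / 2 = p / 2 ^^^ q / 2 := by
  have hh := xor_div_pow p q 1
  simpa using hh

lemma xor_mod_two (p q : ℕ) : (p ^^^ q) % 2 = p % 2 ^^^ q % 2 := by
  have hh := xor_mod_pow p q 1
  simpa using hh

lemma xor_eq_one_of_le {p q : ℕ} (hx : p ^^^ q = 1) (hle : q ≤ p) :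
    p = q + 1 ∧ q % 2 = 0 := by
  have h1 : p / 2 = q / 2 := by
    have hh := xor_div_two p q
    rw [hx] at hh
    exact xor_eq_zero_iff.mp hh.symm
  have h2 : p % 2 ^^^ q % 2 = 1 := by
    have hh := xor_mod_two p q
    rw [hx] at hh
    exact hh.symm
  rcases Nat.mod_two_eq_zero_or_one p with hp | hp <;>
    rcases Nat.mod_two_eq_zero_or_one q with hq | hq <;>
    rw [hp, hq] at h2 <;> simp at h2 <;> omega

lemma xor_one_of_even {m : ℕ} (hm : m % 2 = 0) : m ^^^ 1 = m + 1 := by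
  have h1 : (m ^^^ 1) / 2 = m / 2 := by
    have hh := xor_div_two m 1
    simpa using hh
  have h2 : (m ^^^ 1) % 2 = 1 := by
    have hh := xor_mod_two m 1
    rw [hm] at hh
    simpa using hh
  omega

lemma xor_one_of_odd {m : ℕ} (hm : m % 2 = 1) : m ^^^ 1 = m - 1 := by
  have h1 : (m ^^^ 1) / 2 = m / 2 := by
    have hh := xor_div_two m 1
    simpa using hh
  have h2 : (m ^^^ 1) % 2 = 0 := by
    have hh := xor_mod_two m 1
    rw [hm] at hh
    simpa using hh
  omega

lemma xor_swap {a b c d : ℕ} (H : a ^^^ b = c ^^^ d) : a ^^^ c = b ^^^ d := by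
  apply Nat.eq_of_testBit_eq
  intro i
  have hh := congrArg (fun t => t.testBit i) H
  simp only [Nat.testBit_xor] at *
  cases ha : a.testBit i <;> cases hb : b.testBit i <;> cases hc : c.testBit i <;>
    cases hd : d.testBit i <;> simp_all

-- ## s-facts
lemma s_facts (h : ℕ → ℕ) (s : ℕ) (hs : 1 ≤ s) (hxor : ∀ i ≤ h s, i ^^^ s = i + s) :
    ∃ a : ℕ, s % 2 ^ a = 0 ∧ h s < 2 ^ a := by
  obtain ⟨a, m, hm, rfl⟩ := Nat.exists_eq_two_pow_mul_odd (n := s) (by omega)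
  refine ⟨a, Nat.mul_mod_right _ _, ?_⟩
  by_contra hcon
  push_neg at hcon
  have hx := hxor (2 ^ a) hcon
  have hpos : (0:ℕ) < 2 ^ a := Nat.pos_of_ne_zero (by positivity)
  have hmod : m % 2 = 1 := Nat.odd_iff.mp hm
  obtain ⟨w, rfl⟩ := hm
  have hdiv : (2 ^ a ^^^ 2 ^ a * (2 * w + 1)) / 2 ^ a = 1 ^^^ (2 * w + 1) := by
    rw [xor_div_pow, Nat.mul_div_cancel_left _ hpos, Nat.div_self hpos]
  have hmd : (2 ^ a ^^^ 2 ^ a * (2 * w + 1)) % 2 ^ a = 0 := by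
    rw [xor_mod_pow, Nat.mul_mod_right, Nat.mod_self]
    rfl
  have hm1 : 1 ^^^ (2 * w + 1) = 2 * w := by
    rw [Nat.xor_comm, xor_one_of_odd (by omega)]
    omega
  rw [hm1] at hdiv
  have hsplit := Nat.div_add_mod (2 ^ a ^^^ 2 ^ a * (2 * w + 1)) (2 ^ a)
  rw [hdiv, hmd, Nat.add_zero] at hsplit
  rw [← hsplit] at hx
  have hexp : 2 ^ a * (2 * w + 1) = 2 ^ a * (2 * w) + 2 ^ a := by ring
  omega

-- helpers
lemma pow2_pos (n : ℕ) : 0 < 2 ^ n := Nat.pos_of_ne_zero (by positivity)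

lemma div_pow_eq_one {e k : ℕ} (h1 : 2 ^ k ≤ e) (h2 : e < 2 ^ (k + 1)) : e / 2 ^ k = 1 := by
  apply Nat.div_eq_of_lt_le (by omega)
  rw [pow_succ] at h2
  omega

lemma lt_of_div_pow_eq_zero {x n : ℕ} (h : x / 2 ^ n = 0) : x < 2 ^ n :=
  (Nat.div_eq_zero_iff_lt (pow2_pos n)).mp h

lemma L4 {s a : ℕ} (hsa : s % 2 ^ a = 0) {V w : ℕ} (hV : V < s) (hw : w < 2 ^ a) :
    V ^^^ w < s := by
  have h1 : (V ^^^ w) / 2 ^ a = V / 2 ^ a := by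
    rw [xor_div_pow, Nat.div_eq_of_lt hw, Nat.xor_zero]
  have h2 : V / 2 ^ a < s / 2 ^ a :=
    Nat.div_lt_div_of_lt_of_dvd (Nat.dvd_of_mod_eq_zero hsa) hV
  exact Nat.lt_of_div_lt_div (by rw [h1]; exact h2)

lemma Qfact (h : ℕ → ℕ) (hA : CondA h) (k M x : ℕ) (hx : x < 2 ^ (k + 1)) :
    h (2 ^ (k + 1) * M + x) / 2 ^ k = h (2 ^ (k + 1) * M) / 2 ^ k := by
  have hd : (2 ^ (k + 1) * M + x) / 2 ^ (k + 1) = (2 ^ (k + 1) * M) / 2 ^ (k + 1) := by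
    rw [tk_div _ _ _ hx, Nat.mul_div_cancel_left _ (pow2_pos (k + 1))]
  have := hA _ _ (k + 1) (by omega) hd
  simpa using this

lemma L1 (h : ℕ → ℕ) (hA : CondA h) {s a : ℕ} (hsa : s % 2 ^ a = 0) (hha : h s < 2 ^ a)
    {Z y : ℕ} (hZ : s ≤ Z) (hy : y ≤ h Z) : s ≤ y ^^^ Z := by
  by_cases hc : Z ^^^ s < 2 ^ a
  · have hZs : Z / 2 ^ a = s / 2 ^ a := by
      have hd : Z / 2 ^ a ^^^ s / 2 ^ a = 0 := by
        rw [← xor_div_pow]; exact Nat.div_eq_of_lt hc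
      exact xor_eq_zero_iff.mp hd
    have hZs1 : Z / 2 ^ (a + 1) = s / 2 ^ (a + 1) := by
      rw [pow_succ, ← Nat.div_div_eq_div_mul, hZs, Nat.div_div_eq_div_mul, ← pow_succ]
    have hhZ : h Z / 2 ^ a = h s / 2 ^ a := by
      have := hA Z s (a + 1) (by omega) hZs1
      simpa using this
    have hy' : y < 2 ^ a := by
      have h0 : h Z / 2 ^ a = 0 := by rw [hhZ]; exact Nat.div_eq_of_lt hha
      have := lt_of_div_pow_eq_zero h0
      omega
    have hdy : (y ^^^ Z) / 2 ^ a = s / 2 ^ a := by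
      rw [xor_div_pow, Nat.div_eq_of_lt hy', Nat.zero_xor, hZs]
    have hds := Nat.div_add_mod s (2 ^ a)
    have hmle : 2 ^ a * ((y ^^^ Z) / 2 ^ a) ≤ y ^^^ Z := Nat.mul_div_le _ _
    rw [hdy] at hmle
    omega
  · set e := Z ^^^ s with he
    set j := e.log2 with hj
    have hj1 : 2 ^ j ≤ e := Nat.log2_self_le (by omega)
    have hj2 : e < 2 ^ (j + 1) := Nat.lt_log2_self
    have haj : a ≤ j := by
      by_contra hcon
      push_neg at hcon
      have : (2:ℕ) ^ (j + 1) ≤ 2 ^ a := Nat.pow_le_pow_right (by omega) (by omega)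
      omega
    have hd1 : Z / 2 ^ (j + 1) = s / 2 ^ (j + 1) := by
      have h0 : e / 2 ^ (j + 1) = 0 := Nat.div_eq_of_lt hj2
      rw [he, xor_div_pow] at h0
      exact xor_eq_zero_iff.mp h0
    have hd2 : Z / 2 ^ j ^^^ s / 2 ^ j = 1 := by
      rw [← xor_div_pow, ← he]
      exact div_pow_eq_one hj1 hj2
    obtain ⟨heq, hev⟩ := xor_eq_one_of_le hd2 (Nat.div_le_div_right hZ)
    have hhZ : h Z / 2 ^ j = h s / 2 ^ j := by
      have := hA Z s (j + 1) (by omega) hd1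
      simpa using this
    have hy' : y < 2 ^ j := by
      have h0 : h Z / 2 ^ j = 0 := by
        rw [hhZ]
        exact Nat.div_eq_of_lt (lt_of_lt_of_le hha (Nat.pow_le_pow_right (by omega) haj))
      have := lt_of_div_pow_eq_zero h0
      omega
    have hdy : (y ^^^ Z) / 2 ^ j = s / 2 ^ j + 1 := by
      rw [xor_div_pow, Nat.div_eq_of_lt hy', Nat.zero_xor, heq]
    have hlt : s < 2 ^ j * (s / 2 ^ j) + 2 ^ j := lt_mul_div_succ s (2 ^ j) (pow2_pos j)
    have hmle : 2 ^ j * ((y ^^^ Z) / 2 ^ j) ≤ y ^^^ Z := Nat.mul_div_le _ _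
    rw [hdy] at hmle
    have hmul : 2 ^ j * (s / 2 ^ j + 1) = 2 ^ j * (s / 2 ^ j) + 2 ^ j := by ring
    omega

lemma L2 (h : ℕ → ℕ) (hA : CondA h) {y W Z : ℕ} (hy : y ≤ h Z) (hWZ : W < Z) :
    min y (h W) ^^^ W ≠ y ^^^ Z := by
  intro heq
  set m := min y (h W) with hm
  set e := W ^^^ Z with he
  have hene : e ≠ 0 := by
    intro h0
    have := xor_eq_zero_iff.mp h0
    omega
  set k := e.log2 with hk
  have hj1 : 2 ^ k ≤ e := Nat.log2_self_le hene
  have hj2 : e < 2 ^ (k + 1) := Nat.lt_log2_self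
  have hd1 : W / 2 ^ (k + 1) = Z / 2 ^ (k + 1) := by
    have h0 : e / 2 ^ (k + 1) = 0 := Nat.div_eq_of_lt hj2
    rw [he, xor_div_pow] at h0
    exact xor_eq_zero_iff.mp h0
  have hd2 : Z / 2 ^ k ^^^ W / 2 ^ k = 1 := by
    rw [← xor_div_pow, Nat.xor_comm Z W, ← he]
    exact div_pow_eq_one hj1 hj2
  obtain ⟨heq1, hev⟩ := xor_eq_one_of_le hd2 (Nat.div_le_div_right (le_of_lt hWZ))
  have hhW : h W / 2 ^ k = h Z / 2 ^ k := by
    have := hA W Z (k + 1) (by omega) hd1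
    simpa using this
  have hdiv := congrArg (fun t => t / 2 ^ k) heq
  simp only [xor_div_pow] at hdiv
  have hswap : m / 2 ^ k ^^^ y / 2 ^ k = W / 2 ^ k ^^^ Z / 2 ^ k := xor_swap hdiv
  have hone : W / 2 ^ k ^^^ Z / 2 ^ k = 1 := by rw [Nat.xor_comm]; exact hd2
  rw [hone] at hswap
  have hmyd : m / 2 ^ k ≤ y / 2 ^ k := Nat.div_le_div_right (min_le_left _ _)
  obtain ⟨heq2, hev2⟩ := xor_eq_one_of_le (by rw [Nat.xor_comm] at hswap; exact hswap) hmyd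
  rcases le_total y (h W) with hc | hc
  · have hmy : m = y := min_eq_left hc
    rw [hmy] at heq2
    omega
  · have hmW : m = h W := min_eq_right hc
    have h3 : m / 2 ^ k = h Z / 2 ^ k := by rw [hmW, hhW]
    have h4 : y / 2 ^ k ≤ h Z / 2 ^ k := Nat.div_le_div_right hy
    omega

lemma mul_le_of_le_one {p b : ℕ} (hb : b ≤ 1) : p * b ≤ p := by
  rcases Nat.le_one_iff_eq_zero_or_eq_one.mp hb with rfl | rfl <;> simp

lemma RB (h : ℕ → ℕ) (hA : CondA h) :
    ∀ k M c d : ℕ, c < 2 ^ k → d ≤ 2 ^ k →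
      h (2 ^ k * M + (c ^^^ d) % 2 ^ k) % 2 ^ k < d →
      ∃ x, x < 2 ^ k ∧ (h (2 ^ k * M + x) % 2 ^ k) ^^^ x = c ∧
        h (2 ^ k * M + x) % 2 ^ k < d := by
  intro k
  induction k with
  | zero =>
    intro M c d hc hd hyp
    simp only [pow_zero, Nat.lt_one_iff] at hc
    subst hc
    simp only [pow_zero, Nat.mod_one] at hyp ⊢
    exact ⟨0, by omega, by simp, hyp⟩
  | succ k ih =>
    intro M c d hc hd hyp
    have hppos : 0 < 2 ^ k := pow2_pos k
    have hPpos : 0 < 2 ^ (k + 1) := pow2_pos (k + 1)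
    have hP : (2:ℕ) ^ (k + 1) = 2 ^ k * 2 := by rw [pow_succ]
    obtain ⟨ε, hεlt, hrx⟩ :
        ∃ ε, ε ≤ 1 ∧ ∀ x, x < 2 ^ (k + 1) → h (2 ^ (k + 1) * M + x) % 2 ^ (k + 1)
          = h (2 ^ (k + 1) * M + x) % 2 ^ k + 2 ^ k * ε := by
      refine ⟨h (2 ^ (k + 1) * M) / 2 ^ k % 2, ?_, ?_⟩
      · exact Nat.lt_succ_iff.mp
          (Nat.mod_lt (h (2 ^ (k + 1) * M) / 2 ^ k) (show 0 < 2 from by norm_num))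
      · intro x hx
        have hms : ∀ t : ℕ, t % 2 ^ (k + 1) = t % 2 ^ k + 2 ^ k * (t / 2 ^ k % 2) := by
          intro t
          rw [hP, Nat.mod_mul]
        rw [hms, Qfact h hA k M x hx]
    obtain ⟨γ, c0, hγle, hc0lt, hcsplit⟩ :
        ∃ γ c0, γ ≤ 1 ∧ c0 < 2 ^ k ∧ c = 2 ^ k * γ + c0 := by
      refine ⟨c / 2 ^ k, c % 2 ^ k, ?_, Nat.mod_lt _ hppos, (Nat.div_add_mod c (2 ^ k)).symm⟩
      have h2 : c / 2 ^ k < 2 := by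
        rw [Nat.div_lt_iff_lt_mul hppos]
        omega
      exact Nat.lt_succ_iff.mp h2
    have hXeq : ∀ b x' : ℕ, 2 ^ (k + 1) * M + (2 ^ k * b + x') = 2 ^ k * (2 * M + b) + x' := by
      intro b x'
      rw [hP]
      ring
    have key : ∀ b x', b ≤ 1 → x' < 2 ^ k →
        (h (2 ^ (k + 1) * M + (2 ^ k * b + x')) % 2 ^ (k + 1)) ^^^ (2 ^ k * b + x')
          = 2 ^ k * (ε ^^^ b) + ((h (2 ^ k * (2 * M + b) + x') % 2 ^ k) ^^^ x') := by
      intro b x' hb hx'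
      have hblt : 2 ^ k * b + x' < 2 ^ (k + 1) := by
        have := mul_le_of_le_one (p := 2 ^ k) hb
        omega
      rw [hrx _ hblt]
      have hr : h (2 ^ (k + 1) * M + (2 ^ k * b + x')) % 2 ^ k < 2 ^ k := Nat.mod_lt _ hppos
      rw [Nat.add_comm _ (2 ^ k * ε), xor_combine k ε b _ x' hr hx', hXeq]
    -- the five cases
    by_cases hε0 : ε = 0
    · by_cases hdp : 2 ^ k ≤ d
      · -- case A : simple recursion with d' = 2^k
        obtain ⟨x', hx'lt, hx'c, hx'd⟩ := ih (2 * M + γ) c0 (2 ^ k) hc0lt (le_refl _)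
          (Nat.mod_lt _ hppos)
        have hblt2 : 2 ^ k * γ + x' < 2 ^ (k + 1) := by
          have := mul_le_of_le_one (p := 2 ^ k) hγle
          omega
        refine ⟨2 ^ k * γ + x', hblt2, ?_, ?_⟩
        · rw [key γ x' hγle hx'lt, hε0, Nat.zero_xor, hx'c]
          omega
        · rw [hrx _ hblt2, hε0, Nat.mul_zero, Nat.add_zero, hXeq]
          omega
      · -- case B : d < 2^k, use hyp
        push_neg at hdp
        have he0lt : c0 ^^^ d < 2 ^ k := Nat.xor_lt_two_pow hc0lt hdp
        have hcd : c ^^^ d = 2 ^ k * γ + (c0 ^^^ d) := by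
          conv_lhs => rw [hcsplit, show d = 2 ^ k * 0 + d from by ring]
          rw [xor_combine k γ 0 c0 d hc0lt hdp, Nat.xor_zero]
        have hcdlt : c ^^^ d < 2 ^ (k + 1) := by
          have := mul_le_of_le_one (p := 2 ^ k) hγle
          omega
        rw [Nat.mod_eq_of_lt hcdlt, hcd] at hyp
        have hblt : 2 ^ k * γ + (c0 ^^^ d) < 2 ^ (k + 1) := by
          have := mul_le_of_le_one (p := 2 ^ k) hγle
          omega
        rw [hrx _ hblt, hε0, Nat.mul_zero, Nat.add_zero, hXeq] at hyp
        obtain ⟨x', hx'lt, hx'c, hx'd⟩ := ih (2 * M + γ) c0 d hc0lt (le_of_lt hdp)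
          (by rw [Nat.mod_eq_of_lt he0lt]; exact hyp)
        have hblt2 : 2 ^ k * γ + x' < 2 ^ (k + 1) := by
          have := mul_le_of_le_one (p := 2 ^ k) hγle
          omega
        refine ⟨2 ^ k * γ + x', hblt2, ?_, ?_⟩
        · rw [key γ x' hγle hx'lt, hε0, Nat.zero_xor, hx'c]
          omega
        · rw [hrx _ hblt2, hε0, Nat.mul_zero, Nat.add_zero, hXeq]
          omega
    · have hε1 : ε = 1 := by omega
      by_cases hdp : d ≤ 2 ^ k
      · -- case C : contradiction
        exfalso
        have helt : (c ^^^ d) % 2 ^ (k + 1) < 2 ^ (k + 1) := Nat.mod_lt _ hPpos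
        rw [hrx _ helt, hε1] at hyp
        omega
      · push_neg at hdp
        by_cases hdeq : d = 2 ^ (k + 1)
        · -- case D : d = 2^(k+1), b = 1 - γ, trivial recursion
          obtain ⟨x', hx'lt, hx'c, hx'd⟩ := ih (2 * M + (1 - γ)) c0 (2 ^ k) hc0lt (le_refl _)
            (Nat.mod_lt _ hppos)
          have hblt2 : 2 ^ k * (1 - γ) + x' < 2 ^ (k + 1) := by
            have := mul_le_of_le_one (p := 2 ^ k) (show 1 - γ ≤ 1 from by omega)
            omega
          refine ⟨2 ^ k * (1 - γ) + x', hblt2, ?_, ?_⟩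
          · rw [key (1 - γ) x' (by omega) hx'lt, hε1, hx'c]
            rcases Nat.le_one_iff_eq_zero_or_eq_one.mp hγle with h0 | h0 <;>
              rw [h0] at hcsplit ⊢ <;> simp <;> omega
          · rw [hrx _ hblt2, hε1, Nat.mul_one, hXeq]
            omega
        · -- case E : 2^k < d < 2^(k+1)
          have hdlt : d < 2 ^ (k + 1) := by
            rcases Nat.lt_or_ge d (2 ^ (k + 1)) with hlt | hge
            · exact hlt
            · omega
          set d0 := d - 2 ^ k with hd0def
          have hd0lt : d0 < 2 ^ k := by omega
          have hdsplit : d = 2 ^ k * 1 + d0 := by omega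
          have he0lt : c0 ^^^ d0 < 2 ^ k := Nat.xor_lt_two_pow hc0lt hd0lt
          have hcd : c ^^^ d = 2 ^ k * (γ ^^^ 1) + (c0 ^^^ d0) := by
            conv_lhs => rw [hcsplit, hdsplit]
            rw [xor_combine k γ 1 c0 d0 hc0lt hd0lt]
          have hγ1le : γ ^^^ 1 ≤ 1 := by
            rcases Nat.le_one_iff_eq_zero_or_eq_one.mp hγle with h0 | h0 <;> rw [h0] <;> simp
          have hcdlt : c ^^^ d < 2 ^ (k + 1) := by
            have := mul_le_of_le_one (p := 2 ^ k) hγ1le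
            omega
          rw [Nat.mod_eq_of_lt hcdlt, hcd] at hyp
          have hblt : 2 ^ k * (γ ^^^ 1) + (c0 ^^^ d0) < 2 ^ (k + 1) := by
            have := mul_le_of_le_one (p := 2 ^ k) hγ1le
            omega
          rw [hrx _ hblt, hε1, Nat.mul_one, hXeq] at hyp
          obtain ⟨x', hx'lt, hx'c, hx'd⟩ := ih (2 * M + (γ ^^^ 1)) c0 d0 hc0lt (le_of_lt hd0lt)
            (by rw [Nat.mod_eq_of_lt he0lt]; omega)
          have hblt2 : 2 ^ k * (γ ^^^ 1) + x' < 2 ^ (k + 1) := by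
            have := mul_le_of_le_one (p := 2 ^ k) hγ1le
            omega
          refine ⟨2 ^ k * (γ ^^^ 1) + x', hblt2, ?_, ?_⟩
          · rw [key (γ ^^^ 1) x' hγ1le hx'lt, hε1, hx'c]
            rcases Nat.le_one_iff_eq_zero_or_eq_one.mp hγle with h0 | h0 <;>
              rw [h0] at hcsplit ⊢ <;> simp <;> omega
          · rw [hrx _ hblt2, hε1, Nat.mul_one, hXeq]
            omega

lemma reach (h : ℕ → ℕ) (hmono : Monotone h) (hA : CondA h) {s a : ℕ}
    (hsa : s % 2 ^ a = 0) (hha : h s < 2 ^ a)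
    {Z y u' : ℕ} (hy : y ≤ h Z) (hu1 : s ≤ u') (hu2 : u' < y ^^^ Z) :
    (∃ v, v < y ∧ v ^^^ Z = u') ∨
    (∃ W, s ≤ W ∧ W < Z ∧ min y (h W) ^^^ W = u') := by
  have hD : u' ^^^ (y ^^^ Z) ≠ 0 := by
    intro h0
    have := xor_eq_zero_iff.mp h0
    omega
  obtain ⟨D, hDdef⟩ : ∃ D, D = u' ^^^ (y ^^^ Z) := ⟨_, rfl⟩
  rw [← hDdef] at hD
  obtain ⟨k, hkdef⟩ : ∃ k, k = D.log2 := ⟨_, rfl⟩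
  have hk1 : 2 ^ k ≤ D := by rw [hkdef]; exact Nat.log2_self_le hD
  have hk2 : D < 2 ^ (k + 1) := by rw [hkdef]; exact Nat.lt_log2_self
  have hppos : 0 < 2 ^ k := pow2_pos k
  have hd1 : u' / 2 ^ (k + 1) = (y ^^^ Z) / 2 ^ (k + 1) := by
    have h0 : D / 2 ^ (k + 1) = 0 := Nat.div_eq_of_lt hk2
    rw [hDdef, xor_div_pow] at h0
    exact xor_eq_zero_iff.mp h0
  have hd2 : (y ^^^ Z) / 2 ^ k ^^^ u' / 2 ^ k = 1 := by
    rw [← xor_div_pow, Nat.xor_comm (y ^^^ Z) u', ← hDdef]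
    exact div_pow_eq_one hk1 hk2
  obtain ⟨hq1, hq2⟩ := xor_eq_one_of_le hd2 (Nat.div_le_div_right (le_of_lt hu2))
  have hyZ : (y ^^^ Z) / 2 ^ k = y / 2 ^ k ^^^ Z / 2 ^ k := xor_div_pow y Z k
  have hpar : y / 2 ^ k % 2 ^^^ Z / 2 ^ k % 2 = 1 := by
    rw [← xor_mod_two, ← hyZ, hq1]
    omega
  rcases Nat.mod_two_eq_zero_or_one (y / 2 ^ k) with hyk | hyk
  · -- Case B : Z odd at bit k, y even
    have hZk : Z / 2 ^ k % 2 = 1 := by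
      rw [hyk, Nat.zero_xor] at hpar
      exact hpar
    obtain ⟨W, hWdef⟩ : ∃ W, W = u' ^^^ y := ⟨_, rfl⟩
    have hWy : y ^^^ W = u' := by
      rw [hWdef, Nat.xor_comm u' y, xor_cancel_left]
    have hWZD : W ^^^ Z = D := by
      rw [hWdef, hDdef, Nat.xor_assoc]
    have hd1' : W / 2 ^ (k + 1) = Z / 2 ^ (k + 1) := by
      have h0 : (W ^^^ Z) / 2 ^ (k + 1) = 0 := by rw [hWZD]; exact Nat.div_eq_of_lt hk2
      rw [xor_div_pow] at h0
      exact xor_eq_zero_iff.mp h0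
    have hWdiv : W / 2 ^ k ^^^ Z / 2 ^ k = 1 := by
      rw [← xor_div_pow, hWZD]
      exact div_pow_eq_one hk1 hk2
    have hWk : W / 2 ^ k % 2 = 0 := by
      have e1 : W / 2 ^ k = u' / 2 ^ k ^^^ y / 2 ^ k := by rw [hWdef, xor_div_pow]
      have e2 : W / 2 ^ k % 2 = u' / 2 ^ k % 2 ^^^ y / 2 ^ k % 2 := by
        rw [e1, xor_mod_two]
      rw [e2, hq2, hyk]
      rfl
    have hZW1 : Z / 2 ^ k = W / 2 ^ k + 1 := by
      have e1 : Z / 2 ^ k = W / 2 ^ k ^^^ 1 := by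
        rw [← hWdiv]
        rw [xor_cancel_left]
      rw [e1, xor_one_of_even hWk]
    have hWZ : W < Z := Nat.lt_of_div_lt_div (c := 2 ^ k) (by omega)
    have hQW : h W / 2 ^ k = h Z / 2 ^ k := by
      have := hA W Z (k + 1) (by omega) hd1'
      simpa using this
    have hyq : y / 2 ^ k ≤ h Z / 2 ^ k := Nat.div_le_div_right hy
    by_cases hB1 : y ≤ h W
    · -- B1 : untruncated move to W
      have hWs : s ≤ W := by
        by_contra hcon
        push_neg at hcon
        have hya : y < 2 ^ a := lt_of_le_of_lt (le_trans hB1 (hmono (le_of_lt hcon))) hha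
        have hL4 := L4 hsa hcon hya
        have he : u' = W ^^^ y := by rw [← hWy, Nat.xor_comm]
        omega
      right
      exact ⟨W, hWs, hWZ, by rw [min_eq_left hB1, hWy]⟩
    · -- B2 : truncated move via RB
      push_neg at hB1
      have hqy : h W / 2 ^ k ≤ y / 2 ^ k := Nat.div_le_div_right (le_of_lt hB1)
      have hyqe : y / 2 ^ k = h Z / 2 ^ k :=
        le_antisymm hyq (by rw [← hQW]; exact hqy)
      have hWq : h W / 2 ^ k = y / 2 ^ k := by rw [hQW, hyqe]
      have hrWd : h W % 2 ^ k < y % 2 ^ k := by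
        have e1 := Nat.div_add_mod (h W) (2 ^ k)
        have e2 := Nat.div_add_mod y (2 ^ k)
        rw [hWq] at e1
        omega
      -- decomposition of W
      have hdd : ∀ t : ℕ, t / 2 ^ k / 2 = t / 2 ^ (k + 1) := by
        intro t
        rw [Nat.div_div_eq_div_mul, ← pow_succ]
      have hW2A : W / 2 ^ k = 2 * (Z / 2 ^ (k + 1)) := by
        have e1 := hdd W
        have e2 := Nat.div_add_mod (W / 2 ^ k) 2
        rw [e1, hd1'] at e2
        omega
      have hZ2A : Z / 2 ^ k = 2 * (Z / 2 ^ (k + 1)) + 1 := by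
        have e1 := hdd Z
        have e2 := Nat.div_add_mod (Z / 2 ^ k) 2
        rw [e1] at e2
        omega
      have hWmod : W % 2 ^ k = u' % 2 ^ k ^^^ y % 2 ^ k := by
        rw [hWdef, xor_mod_pow]
      have hcdlt : u' % 2 ^ k ^^^ y % 2 ^ k < 2 ^ k :=
        Nat.xor_lt_two_pow (Nat.mod_lt _ hppos) (Nat.mod_lt _ hppos)
      have hWsplit : 2 ^ k * (2 * (Z / 2 ^ (k + 1))) + (u' % 2 ^ k ^^^ y % 2 ^ k) = W := by
        have := Nat.div_add_mod W (2 ^ k)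
        rw [hW2A, hWmod] at this
        exact this
      obtain ⟨x, hxlt, hxc, hxd⟩ := RB h hA k (2 * (Z / 2 ^ (k + 1))) (u' % 2 ^ k) (y % 2 ^ k)
        (Nat.mod_lt _ hppos) (le_of_lt (Nat.mod_lt _ hppos))
        (by rw [Nat.mod_eq_of_lt hcdlt, hWsplit]; exact hrWd)
      -- the witness X
      obtain ⟨X, hXdef⟩ : ∃ X, X = 2 ^ k * (2 * (Z / 2 ^ (k + 1))) + x := ⟨_, rfl⟩
      have hXdiv : X / 2 ^ k = 2 * (Z / 2 ^ (k + 1)) := by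
        rw [hXdef]
        exact tk_div k _ x hxlt
      have hXd1 : X / 2 ^ (k + 1) = Z / 2 ^ (k + 1) := by
        have e1 := hdd X
        rw [hXdiv] at e1
        omega
      have hQX : h X / 2 ^ k = h Z / 2 ^ k := by
        have := hA X Z (k + 1) (by omega) hXd1
        simpa using this
      have hXq : h X / 2 ^ k = y / 2 ^ k := by rw [hQX, hyqe]
      have hXmod : h X % 2 ^ k = h (2 ^ k * (2 * (Z / 2 ^ (k + 1))) + x) % 2 ^ k := by
        rw [hXdef]
      have hhXy : h X < y := by
        have e1 := Nat.div_add_mod (h X) (2 ^ k)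
        have e2 := Nat.div_add_mod y (2 ^ k)
        rw [hXq] at e1
        rw [← hXmod] at hxd
        omega
      have hXZ : X < Z := Nat.lt_of_div_lt_div (by rw [hXdiv]; omega)
      -- the Grundy value of the truncated move
      have hval : h X ^^^ X = u' := by
        have e1 : h X = 2 ^ k * (h X / 2 ^ k) + h X % 2 ^ k :=
          (Nat.div_add_mod (h X) (2 ^ k)).symm
        have heven : (y / 2 ^ k ^^^ 2 * (Z / 2 ^ (k + 1))) % 2 = 0 := by
          rw [xor_mod_two, hyk, Nat.mul_mod_right]
          rfl
        have hu'div : u' / 2 ^ k = y / 2 ^ k ^^^ 2 * (Z / 2 ^ (k + 1)) := by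
          have e2 : y / 2 ^ k ^^^ Z / 2 ^ k = (y / 2 ^ k ^^^ 2 * (Z / 2 ^ (k + 1))) + 1 := by
            rw [hZ2A, show 2 * (Z / 2 ^ (k + 1)) + 1
                = 2 * (Z / 2 ^ (k + 1)) ^^^ 1 from (xor_one_of_even (by omega)).symm,
              ← Nat.xor_assoc, xor_one_of_even heven]
          rw [← hyZ] at e2
          omega
        calc h X ^^^ X
            = (2 ^ k * (h X / 2 ^ k) + h X % 2 ^ k) ^^^
              (2 ^ k * (2 * (Z / 2 ^ (k + 1))) + x) := by rw [← e1, ← hXdef]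
          _ = 2 ^ k * (h X / 2 ^ k ^^^ 2 * (Z / 2 ^ (k + 1))) + (h X % 2 ^ k ^^^ x) :=
              xor_combine k _ _ _ x (Nat.mod_lt _ hppos) hxlt
          _ = 2 ^ k * (u' / 2 ^ k) + u' % 2 ^ k := by
              rw [hXq, ← hu'div, hXmod, hxc]
          _ = u' := Nat.div_add_mod u' (2 ^ k)
      have hXs : s ≤ X := by
        by_contra hcon
        push_neg at hcon
        have hXa : h X < 2 ^ a := lt_of_le_of_lt (hmono (le_of_lt hcon)) hha
        have hL4 := L4 hsa hcon hXa
        have he : u' = X ^^^ h X := by rw [← hval, Nat.xor_comm]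
        omega
      right
      exact ⟨X, hXs, hXZ, by rw [min_eq_right (le_of_lt hhXy), hval]⟩
  · -- Case A : y odd at bit k
    obtain ⟨v, hvdef⟩ : ∃ v, v = u' ^^^ Z := ⟨_, rfl⟩
    have hvZ : v ^^^ Z = u' := by rw [hvdef]; exact xor_cancel_right u' Z
    have hv : v / 2 ^ k = u' / 2 ^ k ^^^ Z / 2 ^ k := by rw [hvdef, xor_div_pow]
    have hx1 : v / 2 ^ k ^^^ y / 2 ^ k = 1 := by
      have hyx : y / 2 ^ k ^^^ Z / 2 ^ k = u' / 2 ^ k ^^^ 1 := by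
        rw [← hyZ, hq1, xor_one_of_even hq2]
      calc v / 2 ^ k ^^^ y / 2 ^ k
          = u' / 2 ^ k ^^^ (y / 2 ^ k ^^^ Z / 2 ^ k) := by
            rw [hv, Nat.xor_assoc, Nat.xor_comm (Z / 2 ^ k) (y / 2 ^ k)]
        _ = 1 := by rw [hyx, ← Nat.xor_assoc, Nat.xor_self, Nat.zero_xor]
    have hveq : v / 2 ^ k = y / 2 ^ k ^^^ 1 := by
      rw [← hx1, Nat.xor_comm (v / 2 ^ k) (y / 2 ^ k), xor_cancel_left]
    rw [xor_one_of_odd hyk] at hveq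
    have hdlt : v / 2 ^ k < y / 2 ^ k := by
      rcases Nat.eq_zero_or_pos (y / 2 ^ k) with h0 | h0
      · rw [h0] at hyk
        simp at hyk
      · omega
    have hvy : v < y := Nat.lt_of_div_lt_div (c := 2 ^ k) hdlt
    exact Or.inl ⟨v, hvy, hvZ⟩

lemma mex_eq {S : Set ℕ} {m : ℕ} (h1 : ∀ u < m, u ∈ S) (h2 : m ∉ S) : mex S = m := by
  unfold mex
  have hmem : sInf {n | n ∉ S} ∈ {n | n ∉ S} := Nat.sInf_mem ⟨m, h2⟩
  have hle : sInf {n | n ∉ S} ≤ m := Nat.sInf_le h2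
  rcases Nat.lt_or_ge (sInf {n | n ∉ S}) m with hlt | hge
  · exact absurd (h1 _ hlt) hmem
  · exact le_antisymm hle hge

theorem stmt_16 (h : ℕ → ℕ) (hmono : Monotone h) (hA : CondA h)
    (s : ℕ) (hs : 1 ≤ s) (hxor : ∀ i ≤ h s, i ^^^ s = i + s)
    (y z : ℕ) (hyz : y ≤ h (z + s)) :
    grundy (fun t => h (t + s)) y z = (y ^^^ (z + s)) - s := by
  obtain ⟨a, hsa, hha⟩ := s_facts h s hs hxor
  have main : ∀ z y : ℕ, y ≤ h (z + s) →
      grundy (fun t => h (t + s)) y z = (y ^^^ (z + s)) - s := by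
    intro z
    induction z using Nat.strong_induction_on with
    | _ z ihz =>
      intro y
      induction y using Nat.strong_induction_on with
      | _ y ihy =>
        intro hyz2
        rw [grundy]
        apply mex_eq
        · -- every value below is realized
          intro u hu
          have hL1 : s ≤ y ^^^ (z + s) := L1 h hA hsa hha (by omega) hyz2
          have hu1 : s ≤ u + s := by omega
          have hu2 : u + s < y ^^^ (z + s) := by omega
          simp only [Set.mem_union, Set.mem_setOf_eq]
          rcases reach h hmono hA hsa hha hyz2 hu1 hu2 with
            ⟨v, hvy, hveq⟩ | ⟨W, hWs, hWZ, hWeq⟩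
          · refine Or.inl ⟨v, hvy, ?_⟩
            rw [ihy v hvy (by omega), hveq]
            omega
          · refine Or.inr ⟨W - s, by omega, ?_⟩
            have hmin : min y ((fun t => h (t + s)) (W - s)) ≤ h (W - s + s) :=
              min_le_right _ _
            rw [ihz (W - s) (by omega) _ hmin]
            have key : min y ((fun t => h (t + s)) (W - s)) ^^^ (W - s + s) = u + s := by
              show min y (h (W - s + s)) ^^^ (W - s + s) = u + s
              rw [show W - s + s = W from by omega]
              exact hWeq
            rw [key]
            omega
        · -- the value itself is not realized
          intro hmem
          simp only [Set.mem_union, Set.mem_setOf_eq] at hmem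
          have l1 := L1 h hA hsa hha (show s ≤ z + s by omega) hyz2
          rcases hmem with ⟨v, hvy, hveq⟩ | ⟨w, hwz, hweq⟩
          · rw [ihy v hvy (by omega)] at hveq
            have l2 := L1 h hA hsa hha (show s ≤ z + s by omega)
              (show v ≤ h (z + s) by omega)
            have hx : y ^^^ (z + s) = v ^^^ (z + s) := by omega
            have hyv : y = v := by
              have hc := congrArg (fun t => t ^^^ (z + s)) hx
              simpa [xor_cancel_right] using hc
            omega
          · have hmin : min y ((fun t => h (t + s)) w) ≤ h (w + s) := min_le_right _ _
            rw [ihz w hwz _ hmin] at hweq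
            have hweq' : (y ^^^ (z + s)) - s = (min y (h (w + s)) ^^^ (w + s)) - s := hweq
            have l3 : s ≤ min y (h (w + s)) ^^^ (w + s) := by
              rcases le_total y (h (w + s)) with hc | hc
              · rw [min_eq_left hc]
                exact L1 h hA hsa hha (by omega) hc
              · rw [min_eq_right hc]
                exact L1 h hA hsa hha (by omega) (le_refl _)
            have heq2 : min y (h (w + s)) ^^^ (w + s) = y ^^^ (z + s) := by omega
            exact L2 h hA hyz2 (show w + s < z + s by omega) heq2
  exact main z y hyz
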